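/- arXiv:2209.07835 — 4 statements merged into one kernel-verified Lean document; each statement's English description precedes it below -/
import Mathlib

section
/- Let r : ℝ → ℝ be three times continuously differentiable, τ > 0, and t ∈ ℝ. Then |(3r(t) - 4r(t-τ) + r(t-2τ))/(2τ) - r'(t)|² ≤ (τ³/2) ∫_{t-2τ}^{t} |r'''(s)|² ds. -/
open intervalIntegral

/-- Cauchy–Schwarz for interval integrals of continuous functions. -/
lemma my_cs (f g : ℝ → ℝ) (hf : Continuous f) (hg : Continuous g) {a b : ℝ} (hab : a ≤ b) :
    (∫ s in a..b, f s * g s) ^ 2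
      ≤ (∫ s in a..b, f s ^ 2) * (∫ s in a..b, g s ^ 2) := by
  set A := ∫ s in a..b, f s ^ 2 with hA
  set B := ∫ s in a..b, f s * g s with hB
  set C := ∫ s in a..b, g s ^ 2 with hC
  have key : ∀ x : ℝ, 0 ≤ A * (x * x) + (2 * B) * x + C := by
    intro x
    have e : ∀ s, (x * f s + g s) ^ 2
        = x ^ 2 * f s ^ 2 + 2 * x * (f s * g s) + g s ^ 2 := by intro s; ring
    have i1 : IntervalIntegrable (fun s => x ^ 2 * f s ^ 2) MeasureTheory.volume a b :=
      (continuous_const.mul (hf.pow 2)).intervalIntegrable a b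
    have i2 : IntervalIntegrable (fun s => 2 * x * (f s * g s)) MeasureTheory.volume a b :=
      (continuous_const.mul (hf.mul hg)).intervalIntegrable a b
    have i3 : IntervalIntegrable (fun s => g s ^ 2) MeasureTheory.volume a b :=
      (hg.pow 2).intervalIntegrable a b
    have h1 : (∫ s in a..b, (x * f s + g s) ^ 2)
        = x ^ 2 * A + 2 * x * B + C := by
      simp_rw [e]
      rw [integral_add (i1.add i2) i3, integral_add i1 i2,
        integral_const_mul, integral_const_mul]
    have h2 : 0 ≤ ∫ s in a..b, (x * f s + g s) ^ 2 :=
      integral_nonneg hab (fun s _ => sq_nonneg _)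
    nlinarith [h2, h1]
  have := discrim_le_zero key
  rw [discrim] at this
  nlinarith [this]

/-- Taylor's formula with integral remainder, order 2. -/
lemma my_taylor2 (r : ℝ → ℝ) (hr : ContDiff ℝ 3 r) (t a : ℝ) :
    r a = r t + deriv r t * (a - t) + iteratedDeriv 2 r t * (a - t) ^ 2 / 2
        + ∫ s in t..a, (a - s) ^ 2 / 2 * iteratedDeriv 3 r s := by
  have hd0 : Differentiable ℝ r := by
    have := hr.differentiable_iteratedDeriv 0 (by norm_num)
    simpa [iteratedDeriv_zero] using this
  have hd1 : Differentiable ℝ (deriv r) := by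
    have := hr.differentiable_iteratedDeriv 1 (by norm_num)
    simpa [iteratedDeriv_one] using this
  have hd2 : Differentiable ℝ (iteratedDeriv 2 r) :=
    hr.differentiable_iteratedDeriv 2 (by norm_num)
  have hc3 : Continuous (iteratedDeriv 3 r) :=
    hr.continuous_iteratedDeriv 3 (by norm_num)
  set F : ℝ → ℝ := fun x =>
    r x + deriv r x * (a - x) + iteratedDeriv 2 r x * (a - x) ^ 2 / 2 with hF
  have hFd : ∀ x : ℝ, HasDerivAt F ((a - x) ^ 2 / 2 * iteratedDeriv 3 r x) x := by
    intro x
    have h0 : HasDerivAt r (deriv r x) x := (hd0 x).hasDerivAt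
    have h1 : HasDerivAt (deriv r) (iteratedDeriv 2 r x) x := by
      have := (hd1 x).hasDerivAt
      rwa [show iteratedDeriv 2 r x = deriv (deriv r) x by
        simp [iteratedDeriv_succ, iteratedDeriv_one]]
    have h2 : HasDerivAt (iteratedDeriv 2 r) (iteratedDeriv 3 r x) x := by
      have := (hd2 x).hasDerivAt
      rwa [show iteratedDeriv 3 r x = deriv (iteratedDeriv 2 r) x by
        rw [iteratedDeriv_succ]]
    have hax : HasDerivAt (fun x : ℝ => a - x) (-1) x := by
      simpa using (hasDerivAt_id x).const_sub a
    have hax2 : HasDerivAt (fun x : ℝ => (a - x) ^ 2) (2 * (a - x) ^ 1 * (-1)) x :=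
      hax.pow 2
    have H := (h0.add (h1.mul hax)).add ((h2.mul hax2).div_const 2)
    exact H.congr_deriv (by ring)
  have hint : IntervalIntegrable (fun s => (a - s) ^ 2 / 2 * iteratedDeriv 3 r s)
      MeasureTheory.volume t a :=
    ((((continuous_const.sub continuous_id).pow 2).div_const 2).mul hc3).intervalIntegrable t a
  have := integral_eq_sub_of_hasDerivAt (fun x _ => hFd x) hint
  have hFa : F a = r a := by simp [hF]
  rw [hFa, hF] at this
  linarith [this]

/-- `HasDerivAt` for shifted monomials. -/
lemma my_shift_pow (n : ℕ) (c t x : ℝ) :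
    HasDerivAt (fun x : ℝ => c * (x - t) ^ n) (c * (n * (x - t) ^ (n - 1))) x := by
  have := (((hasDerivAt_id x).sub_const t).pow n).const_mul c
  simpa using this

lemma arith (I1 I2 M1 M2 τ Y : ℝ) (hτ : 0 < τ) (hM1 : 0 ≤ M1) (hM2 : 0 ≤ M2)
    (h1 : I1^2 ≤ 17/60*τ^5*M1) (h2 : I2^2 ≤ 1/20*τ^5*M2) (hY : 2*τ*Y = I1 + I2) :
    Y^2 ≤ τ^3/2*(M1+M2) := by
  have hτ5 : 0 < τ^5 := by positivity
  have key : (I1 + I2)^2 ≤ (17/60*τ^5 + 1/20*τ^5) * (M1 + M2) := by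
    nlinarith [sq_nonneg (I1 - I2), sq_nonneg (I1 + I2), mul_nonneg hM1 hM2,
      sq_nonneg (17/60*τ^5*M2 - 1/20*τ^5*M1), mul_nonneg (mul_nonneg hτ5.le hM1) hM2,
      sq_nonneg (I1*I2)]
  have he : 4*τ^2*Y^2 = (I1+I2)^2 := by rw [← hY]; ring
  have h4 : 4*τ^2*Y^2 ≤ 1/3*τ^5*(M1+M2) := by linarith [key]
  nlinarith [h4, pow_pos hτ 2, mul_nonneg hτ5.le (add_nonneg hM1 hM2), sq_nonneg Y]

theorem stmt_7 (r : ℝ → ℝ) (hr : ContDiff ℝ 3 r) (τ : ℝ) (hτ : 0 < τ) (t : ℝ) :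
    |(3 * r t - 4 * r (t - τ) + r (t - 2*τ)) / (2*τ) - deriv r t|^2
      ≤ τ^3 / 2 * ∫ s in (t - 2*τ)..t, |iteratedDeriv 3 r s|^2 := by
  have hc3 : Continuous (iteratedDeriv 3 r) :=
    hr.continuous_iteratedDeriv 3 (by norm_num)
  set d3 : ℝ → ℝ := iteratedDeriv 3 r with hd3
  set K1 : ℝ → ℝ := fun s => ((t - τ) - s) ^ 2 / 2 * d3 s with hK1
  set K2 : ℝ → ℝ := fun s => ((t - 2*τ) - s) ^ 2 / 2 * d3 s with hK2
  have hK1c : Continuous K1 := by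
    apply Continuous.mul _ hc3; fun_prop
  have hK2c : Continuous K2 := by
    apply Continuous.mul _ hc3; fun_prop
  set f1 : ℝ → ℝ := fun s => 2 * ((t - τ) - s) ^ 2 - ((t - 2*τ) - s) ^ 2 / 2 with hf1
  set f2 : ℝ → ℝ := fun s => -(((t - 2*τ) - s) ^ 2 / 2) with hf2
  have hf1c : Continuous f1 := by fun_prop
  have hf2c : Continuous f2 := by fun_prop
  set I1 := ∫ s in (t - τ)..t, f1 s * d3 s with hI1
  set I2 := ∫ s in (t - 2*τ)..(t - τ), f2 s * d3 s with hI2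
  -- Taylor expansions
  have ht1 := my_taylor2 r hr t (t - τ)
  have ht2 := my_taylor2 r hr t (t - 2*τ)
  -- orientations and splitting
  have hsym1 : (∫ s in t..(t - τ), ((t - τ) - s) ^ 2 / 2 * d3 s)
      = -∫ s in (t - τ)..t, K1 s := integral_symm _ _
  have hsym2 : (∫ s in t..(t - 2*τ), ((t - 2*τ) - s) ^ 2 / 2 * d3 s)
      = -∫ s in (t - 2*τ)..t, K2 s := integral_symm _ _
  have hsplit : (∫ s in (t - 2*τ)..(t - τ), K2 s) + (∫ s in (t - τ)..t, K2 s)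
      = ∫ s in (t - 2*τ)..t, K2 s :=
    integral_add_adjacent_intervals (hK2c.intervalIntegrable _ _) (hK2c.intervalIntegrable _ _)
  -- express I1, I2 via K1, K2
  have hI1' : I1 = 4 * (∫ s in (t - τ)..t, K1 s) - (∫ s in (t - τ)..t, K2 s) := by
    have e1 : ∀ s, f1 s * d3 s = 4 * K1 s - K2 s := by
      intro s; simp only [hf1, hK1, hK2]; ring
    rw [hI1]
    simp_rw [e1]
    rw [integral_sub (f := fun s => 4 * K1 s) ((continuous_const.mul hK1c).intervalIntegrable _ _) (hK2c.intervalIntegrable _ _),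
      intervalIntegral.integral_const_mul]
  have hI2' : I2 = -(∫ s in (t - 2*τ)..(t - τ), K2 s) := by
    have e2 : ∀ s, f2 s * d3 s = -(K2 s) := by
      intro s; simp only [hf2, hK2]; ring
    rw [hI2]
    simp_rw [e2]
    rw [integral_neg]
  -- key identity
  have hX : 3 * r t - 4 * r (t - τ) + r (t - 2*τ) - 2*τ * deriv r t = I1 + I2 := by
    rw [hsym1] at ht1
    rw [hsym2] at ht2
    rw [← hsplit] at ht2
    rw [hI1', hI2']
    linear_combination (-4) * ht1 + ht2
  -- Cauchy–Schwarz bounds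
  have hcs1 : I1 ^ 2 ≤ (∫ s in (t - τ)..t, f1 s ^ 2) * (∫ s in (t - τ)..t, d3 s ^ 2) :=
    my_cs f1 d3 hf1c hc3 (by linarith)
  have hcs2 : I2 ^ 2
      ≤ (∫ s in (t - 2*τ)..(t - τ), f2 s ^ 2) * (∫ s in (t - 2*τ)..(t - τ), d3 s ^ 2) :=
    my_cs f2 d3 hf2c hc3 (by linarith)
  -- exact values of the kernel integrals
  have hA1 : (∫ s in (t - τ)..t, f1 s ^ 2) = 17/60 * τ^5 := by
    have hQ : ∀ x : ℝ, HasDerivAt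
        (fun x : ℝ => 9/20 * (x - t)^5 + (3/2*τ) * (x - t)^4 + (4/3*τ^2) * (x - t)^3)
        (f1 x ^ 2) x := by
      intro x
      have H := ((my_shift_pow 5 (9/20) t x).add (my_shift_pow 4 (3/2*τ) t x)).add
        (my_shift_pow 3 (4/3*τ^2) t x)
      refine H.congr_deriv ?_
      symm
      simp only [hf1]
      norm_num
      ring
    rw [integral_eq_sub_of_hasDerivAt (fun x _ => hQ x) ((hf1c.pow 2).intervalIntegrable _ _)]
    ring
  have hA2 : (∫ s in (t - 2*τ)..(t - τ), f2 s ^ 2) = 1/20 * τ^5 := by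
    have hQ : ∀ x : ℝ, HasDerivAt (fun x : ℝ => 1/20 * (x - (t - 2*τ))^5) (f2 x ^ 2) x := by
      intro x
      have H := my_shift_pow 5 (1/20) (t - 2*τ) x
      convert H using 1
      simp only [hf2]
      norm_num
      ring
    rw [integral_eq_sub_of_hasDerivAt (fun x _ => hQ x) ((hf2c.pow 2).intervalIntegrable _ _)]
    ring
  -- the L² pieces
  set M1 := ∫ s in (t - τ)..t, d3 s ^ 2 with hM1d
  set M2 := ∫ s in (t - 2*τ)..(t - τ), d3 s ^ 2 with hM2d
  have hM1 : 0 ≤ M1 := integral_nonneg (by linarith) (fun s _ => sq_nonneg _)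
  have hM2 : 0 ≤ M2 := integral_nonneg (by linarith) (fun s _ => sq_nonneg _)
  have hMsplit : M2 + M1 = ∫ s in (t - 2*τ)..t, d3 s ^ 2 :=
    integral_add_adjacent_intervals ((hc3.pow 2).intervalIntegrable _ _)
      ((hc3.pow 2).intervalIntegrable _ _)
  rw [hA1] at hcs1
  rw [hA2] at hcs2
  -- rewrite absolute values
  have habs : (∫ s in (t - 2*τ)..t, |iteratedDeriv 3 r s|^2)
      = ∫ s in (t - 2*τ)..t, d3 s ^ 2 := by
    simp [sq_abs, hd3]
  rw [habs, ← hMsplit, sq_abs]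
  -- final arithmetic
  set Y := (3 * r t - 4 * r (t - τ) + r (t - 2*τ)) / (2*τ) - deriv r t with hYd
  have hY : 2*τ*Y = I1 + I2 := by
    rw [hYd, ← hX]
    field_simp
  have := arith I1 I2 M1 M2 τ Y hτ hM1 hM2 hcs1 hcs2 hY
  linarith [this]
end

section
/- Let r : ℝ → ℝ be twice continuously differentiable, τ > 0, and t ∈ ℝ. Then |r(t) - 2r(t-τ) + r(t-2τ)|² ≤ (2τ³/3) ∫_{t-2τ}^{t} |r''(s)|² ds. -/
open MeasureTheory intervalIntegral Set

theorem stmt_8 (r : ℝ → ℝ) (hr : ContDiff ℝ 2 r) (τ : ℝ) (hτ : 0 < τ) (t : ℝ) :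
    |r t - 2 * r (t - τ) + r (t - 2*τ)|^2
      ≤ 2 * τ^3 / 3 * ∫ s in (t - 2*τ)..t, |iteratedDeriv 2 r s|^2 := by
  have h21 : (2 : WithTop ℕ∞) = 1 + 1 := by norm_num
  rw [h21] at hr
  obtain ⟨hdiff, -, hr1⟩ := contDiff_succ_iff_deriv.mp hr
  have hdiff' : Differentiable ℝ (deriv r) := hr1.differentiable one_ne_zero
  have hcont'' : Continuous (deriv (deriv r)) := hr1.continuous_deriv le_rfl
  have hcont' : Continuous (deriv r) := hdiff'.continuous
  set a := t - 2*τ with ha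
  set m := t - τ with hm
  have ham : a ≤ m := by simp [ha, hm]; linarith
  have hmc : m ≤ t := by simp [hm]; linarith
  have hac : a ≤ t := le_trans ham hmc
  set f := deriv (deriv r) with hf
  have hit : ∀ s, iteratedDeriv 2 r s = f s := by
    intro s; rw [iteratedDeriv_succ, iteratedDeriv_one]
  set K : ℝ → ℝ := fun s => τ - |s - m| with hK
  have hKcont : Continuous K := by fun_prop
  -- the integral identity
  have hint1 : IntervalIntegrable (fun s => K s * f s) volume a m :=
    (hKcont.mul hcont'').intervalIntegrable _ _
  have hint2 : IntervalIntegrable (fun s => K s * f s) volume m t :=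
    (hKcont.mul hcont'').intervalIntegrable _ _
  have hid1 : ∫ s in a..m, K s * f s = τ * deriv r m - r m + r a := by
    have hcongr : ∫ s in a..m, K s * f s = ∫ s in a..m, (s - a) * f s := by
      apply intervalIntegral.integral_congr
      intro s hs
      rw [uIcc_of_le ham] at hs
      have h1 : s - m ≤ 0 := by linarith [hs.2]
      have : |s - m| = m - s := by rw [abs_of_nonpos h1]; ring
      simp only [hK]
      rw [this, ha, hm]; ring_nf
    rw [hcongr]
    have : ∀ s ∈ uIcc a m, HasDerivAt (fun x => (x - a) * deriv r x - r x) ((s - a) * f s) s := by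
      intro s _
      have h1 : HasDerivAt (fun x => (x - a) * deriv r x) (1 * deriv r s + (s - a) * f s) s :=
        ((hasDerivAt_id s).sub_const a).mul (hdiff' s).hasDerivAt
      have h2 := h1.sub (hdiff s).hasDerivAt
      exact h2.congr_deriv (by ring)
    rw [intervalIntegral.integral_eq_sub_of_hasDerivAt this
      (((continuous_id.sub continuous_const).mul hcont'').intervalIntegrable _ _)]
    have : m - a = τ := by rw [ha, hm]; ring
    rw [this]; ring_nf
  have hid2 : ∫ s in m..t, K s * f s = r t - τ * deriv r m - r m := by
    have hcongr : ∫ s in m..t, K s * f s = ∫ s in m..t, (t - s) * f s := by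
      apply intervalIntegral.integral_congr
      intro s hs
      rw [uIcc_of_le hmc] at hs
      have h1 : 0 ≤ s - m := by linarith [hs.1]
      have : |s - m| = s - m := abs_of_nonneg h1
      simp only [hK]
      rw [this, hm]; ring_nf
    rw [hcongr]
    have : ∀ s ∈ uIcc m t, HasDerivAt (fun x => (t - x) * deriv r x + r x) ((t - s) * f s) s := by
      intro s _
      have h1 : HasDerivAt (fun x => (t - x) * deriv r x) ((0 - 1) * deriv r s + (t - s) * f s) s :=
        ((hasDerivAt_const s t).sub (hasDerivAt_id s)).mul (hdiff' s).hasDerivAt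
      have h2 := h1.add (hdiff s).hasDerivAt
      exact h2.congr_deriv (by ring)
    rw [intervalIntegral.integral_eq_sub_of_hasDerivAt this
      (((continuous_const.sub continuous_id).mul hcont'').intervalIntegrable _ _)]
    have : t - m = τ := by rw [hm]; ring
    rw [this]; ring_nf
  have hid : r t - 2 * r m + r a = ∫ s in a..t, K s * f s := by
    rw [← intervalIntegral.integral_add_adjacent_intervals hint1 hint2, hid1, hid2]; ring
  -- compute ∫ K²
  have hK2 : ∫ s in a..t, (K s)^2 = 2 * τ^3 / 3 := by
    have i1 : IntervalIntegrable (fun s => (K s)^2) volume a m :=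
      ((hKcont.pow 2)).intervalIntegrable _ _
    have i2 : IntervalIntegrable (fun s => (K s)^2) volume m t :=
      ((hKcont.pow 2)).intervalIntegrable _ _
    rw [← intervalIntegral.integral_add_adjacent_intervals i1 i2]
    have e1 : ∫ s in a..m, (K s)^2 = ∫ s in a..m, (s - a)^2 := by
      apply intervalIntegral.integral_congr
      intro s hs
      rw [uIcc_of_le ham] at hs
      have h1 : s - m ≤ 0 := by linarith [hs.2]
      simp only [hK]
      rw [abs_of_nonpos h1, ha, hm]; ring_nf
    have e2 : ∫ s in m..t, (K s)^2 = ∫ s in m..t, (t - s)^2 := by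
      apply intervalIntegral.integral_congr
      intro s hs
      rw [uIcc_of_le hmc] at hs
      have h1 : 0 ≤ s - m := by linarith [hs.1]
      simp only [hK]
      rw [abs_of_nonneg h1, hm]; ring_nf
    rw [e1, e2]
    have v1 : ∫ s in a..m, (s - a)^2 = τ^3/3 := by
      rw [intervalIntegral.integral_comp_sub_right (fun x => x^2) a, integral_pow]
      have : m - a = τ := by rw [ha, hm]; ring
      rw [this]; simp; ring
    have v2 : ∫ s in m..t, (t - s)^2 = τ^3/3 := by
      rw [intervalIntegral.integral_comp_sub_left (fun x => x^2) t, integral_pow]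
      have h1 : t - t = 0 := by ring
      have h2 : t - m = τ := by rw [hm]; ring
      rw [h1, h2]; simp; ring
    rw [v1, v2]; ring
  -- Cauchy-Schwarz
  set μ := volume.restrict (Ioc a t) with hμ
  haveI : IsFiniteMeasure μ := by
    constructor
    rw [hμ, Measure.restrict_apply_univ, Real.volume_Ioc]
    exact ENNReal.ofReal_lt_top
  have memL2 : ∀ g : ℝ → ℝ, Continuous g → MemLp g (ENNReal.ofReal 2) μ := by
    intro g hg
    obtain ⟨C, hC⟩ := (isCompact_Icc (a := a) (b := t)).exists_bound_of_continuousOn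
      hg.continuousOn
    exact MemLp.of_bound hg.aestronglyMeasurable C
      ((ae_restrict_iff' measurableSet_Ioc).2 (Filter.Eventually.of_forall
        fun x hx => hC x (Ioc_subset_Icc_self hx)))
  have hpq : Real.HolderConjugate 2 2 := Real.HolderConjugate.two_two
  have hCS := MeasureTheory.integral_mul_norm_le_Lp_mul_Lq (μ := μ) hpq
    (memL2 K hKcont) (memL2 f hcont'')
  set X := ∫ s in a..t, (K s)^2 with hX
  set Y := ∫ s in a..t, (f s)^2 with hY
  have hXnn : 0 ≤ X := intervalIntegral.integral_nonneg hac (fun s _ => sq_nonneg _)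
  have hYnn : 0 ≤ Y := intervalIntegral.integral_nonneg hac (fun s _ => sq_nonneg _)
  have hCS' : |∫ s in a..t, K s * f s| ≤ X ^ (1/2:ℝ) * Y ^ (1/2:ℝ) := by
    have h1 : |∫ s in a..t, K s * f s| ≤ ∫ s in a..t, |K s * f s| :=
      intervalIntegral.abs_integral_le_integral_abs hac
    have h2 : ∫ s in a..t, |K s * f s| = ∫ x, ‖K x‖ * ‖f x‖ ∂μ := by
      rw [intervalIntegral.integral_of_le hac]
      simp [abs_mul, Real.norm_eq_abs]
      rw [hμ]
    have h3 : (∫ x, ‖K x‖ ^ (2:ℝ) ∂μ) = X := by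
      rw [hX, intervalIntegral.integral_of_le hac]
      apply setIntegral_congr_fun measurableSet_Ioc
      intro x _
      simp only [Real.norm_eq_abs]
      rw [show (2:ℝ) = ((2:ℕ):ℝ) by norm_num, Real.rpow_natCast, sq_abs]
    have h4 : (∫ x, ‖f x‖ ^ (2:ℝ) ∂μ) = Y := by
      rw [hY, intervalIntegral.integral_of_le hac]
      apply setIntegral_congr_fun measurableSet_Ioc
      intro x _
      simp only [Real.norm_eq_abs]
      rw [show (2:ℝ) = ((2:ℕ):ℝ) by norm_num, Real.rpow_natCast, sq_abs]
    calc |∫ s in a..t, K s * f s| ≤ ∫ x, ‖K x‖ * ‖f x‖ ∂μ := h2 ▸ h1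
      _ ≤ (∫ x, ‖K x‖ ^ (2:ℝ) ∂μ) ^ (1/(2:ℝ)) * (∫ x, ‖f x‖ ^ (2:ℝ) ∂μ) ^ (1/(2:ℝ)) := hCS
      _ = X ^ (1/2:ℝ) * Y ^ (1/2:ℝ) := by rw [h3, h4]
  have hsq : |r t - 2 * r m + r a| ^ 2 ≤ X * Y := by
    have h5 : |r t - 2 * r m + r a| = |∫ s in a..t, K s * f s| := by rw [hid]
    calc |r t - 2 * r m + r a| ^ 2 ≤ (X ^ (1/2:ℝ) * Y ^ (1/2:ℝ)) ^ 2 := by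
          apply pow_le_pow_left₀ (abs_nonneg _)
          rw [h5]; exact hCS'
      _ = X * Y := by
          rw [mul_pow, ← Real.rpow_natCast (X ^ (1/2:ℝ)) 2, ← Real.rpow_natCast (Y ^ (1/2:ℝ)) 2,
            ← Real.rpow_mul hXnn, ← Real.rpow_mul hYnn]
          norm_num
  have hfin : ∫ s in a..t, |iteratedDeriv 2 r s|^2 = Y := by
    rw [hY]; apply intervalIntegral.integral_congr; intro s _; simp only [hit s, sq_abs]
  rw [hfin, ← hK2]
  exact hsq
end

section
/- Let r : ℝ → ℝ be three times continuously differentiable, τ > 0, and t ∈ ℝ. Then |r(t) - 3r(t-τ) + 3r(t-2τ) - r(t-3τ)|² ≤ (9τ⁵/8) ∫_{t-3τ}^{t} |r'''(s)|² ds. -/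
open intervalIntegral

/-- Cauchy–Schwarz for interval integrals of continuous functions. -/
lemma cs_aux (g : ℝ → ℝ) (τ : ℝ) (hτ : 0 < τ) (hg : Continuous g) :
    (∫ u in (0:ℝ)..τ, g u)^2 ≤ τ * ∫ u in (0:ℝ)..τ, (g u)^2 := by
  have hint : IntervalIntegrable g MeasureTheory.volume 0 τ := hg.intervalIntegrable _ _
  have hint2 : IntervalIntegrable (fun u => (g u)^2) MeasureTheory.volume 0 τ :=
    (hg.pow 2).intervalIntegrable _ _
  set m : ℝ := (∫ u in (0:ℝ)..τ, g u) / τ with hm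
  have hmE : ∫ u in (0:ℝ)..τ, g u = m * τ := by
    rw [hm, div_mul_cancel₀ _ hτ.ne']
  have h0 : 0 ≤ ∫ u in (0:ℝ)..τ, (g u - m)^2 :=
    intervalIntegral.integral_nonneg hτ.le (fun _ _ => sq_nonneg _)
  have hexp : ∫ u in (0:ℝ)..τ, (g u - m)^2
      = (∫ u in (0:ℝ)..τ, (g u)^2) - (2*m) * (∫ u in (0:ℝ)..τ, g u) + τ * m^2 := by
    have h1 : ∀ u : ℝ, (g u - m)^2 = ((g u)^2 - (2*m) * g u) + m^2 := fun u => by ring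
    simp_rw [h1]
    rw [intervalIntegral.integral_add (hint2.sub (hint.const_mul _)),
      intervalIntegral.integral_sub hint2 (hint.const_mul _),
      intervalIntegral.integral_const_mul, intervalIntegral.integral_const]
    · simp [smul_eq_mul]
    · exact intervalIntegrable_const
  rw [hexp, hmE] at h0
  rw [hmE]
  nlinarith [mul_nonneg hτ.le h0]

/-- FTC step. -/
lemma ftc_aux (f : ℝ → ℝ) (hf : Differentiable ℝ f) (hf' : Continuous (deriv f)) (τ x : ℝ) :
    ∫ u in (0:ℝ)..τ, deriv f (x - u) = f x - f (x - τ) := by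
  rw [intervalIntegral.integral_comp_sub_left (deriv f) x, sub_zero]
  exact intervalIntegral.integral_deriv_eq_sub (fun y _ => hf y)
    (hf'.intervalIntegrable _ _)

theorem stmt_9 (r : ℝ → ℝ) (hr : ContDiff ℝ 3 r) (τ : ℝ) (hτ : 0 < τ) (t : ℝ) :
    |r t - 3 * r (t - τ) + 3 * r (t - 2*τ) - r (t - 3*τ)|^2
      ≤ 9 * τ^5 / 8 * ∫ s in (t - 3*τ)..t, |iteratedDeriv 3 r s|^2 := by
  set f1 := iteratedDeriv 1 r with hf1
  set f2 := iteratedDeriv 2 r with hf2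
  set f3 := iteratedDeriv 3 r with hf3
  have hd0 : Differentiable ℝ r := hr.differentiable (by norm_num)
  have hd1 : Differentiable ℝ f1 := hr.differentiable_iteratedDeriv 1 (by norm_num)
  have hd2 : Differentiable ℝ f2 := hr.differentiable_iteratedDeriv 2 (by norm_num)
  have hc1 : Continuous f1 := hr.continuous_iteratedDeriv 1 (by norm_num)
  have hc2 : Continuous f2 := hr.continuous_iteratedDeriv 2 (by norm_num)
  have hc3 : Continuous f3 := hr.continuous_iteratedDeriv 3 (by norm_num)
  have e1 : deriv r = f1 := by rw [hf1, iteratedDeriv_one]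
  have e2 : deriv f1 = f2 := by rw [hf1, hf2, ← iteratedDeriv_succ]
  have e3 : deriv f2 = f3 := by rw [hf2, hf3, ← iteratedDeriv_succ]
  have Ia : ∀ x : ℝ, ∫ u in (0:ℝ)..τ, f1 (x - u) = r x - r (x - τ) := by
    intro x; rw [← e1]; exact ftc_aux r hd0 (e1 ▸ hc1) τ x
  have Ib : ∀ x : ℝ, ∫ u in (0:ℝ)..τ, f2 (x - u) = f1 x - f1 (x - τ) := by
    intro x; rw [← e2]; exact ftc_aux f1 hd1 (e2 ▸ hc2) τ x
  have Ic : ∀ x : ℝ, ∫ u in (0:ℝ)..τ, f3 (x - u) = f2 x - f2 (x - τ) := by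
    intro x; rw [← e3]; exact ftc_aux f2 hd2 (e3 ▸ hc3) τ x
  set I : ℝ := ∫ s in (t - 3*τ)..t, (f3 s)^2 with hI
  have hInn : 0 ≤ I := intervalIntegral.integral_nonneg (by linarith) (fun _ _ => sq_nonneg _)
  -- inner bound: for t - 2τ ≤ y ≤ t, (f2 y - f2 (y-τ))² ≤ τ * I
  have hG : ∀ y : ℝ, t - 2*τ ≤ y → y ≤ t → (f2 y - f2 (y - τ))^2 ≤ τ * I := by
    intro y hy1 hy2
    rw [← Ic y]
    have h1 : (∫ u in (0:ℝ)..τ, f3 (y - u))^2 ≤ τ * ∫ u in (0:ℝ)..τ, (f3 (y - u))^2 :=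
      cs_aux _ τ hτ (hc3.comp (continuous_const.sub continuous_id))
    have h2 : ∫ u in (0:ℝ)..τ, (f3 (y - u))^2 ≤ I := by
      have := intervalIntegral.integral_comp_sub_left (fun s => (f3 s)^2) y (a := 0) (b := τ)
      rw [this, sub_zero, hI]
      exact intervalIntegral.integral_mono_interval (by linarith) (by linarith) hy2
        (Filter.Eventually.of_forall (fun s => sq_nonneg _))
        (((hc3.pow 2).intervalIntegrable _ _))
    nlinarith
  -- middle function H
  set G : ℝ → ℝ := fun y => f2 y - f2 (y - τ) with hGdef
  have hGc : Continuous G := hc2.sub (hc2.comp (continuous_id.sub continuous_const))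
  have hH : ∀ x : ℝ, ∫ v in (0:ℝ)..τ, G (x - v) = f1 x - 2 * f1 (x - τ) + f1 (x - 2*τ) := by
    intro x
    have : ∀ v : ℝ, G (x - v) = f2 (x - v) - f2 ((x - τ) - v) := by
      intro v; simp only [hGdef]; ring_nf
    simp_rw [this]
    have ic : ∀ c : ℝ, IntervalIntegrable (fun v => f2 (c - v)) MeasureTheory.volume 0 τ :=
      fun c => Continuous.intervalIntegrable (by fun_prop) 0 τ
    rw [intervalIntegral.integral_sub (ic x) (ic (x - τ)), Ib x, Ib (x - τ)]
    ring_nf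
  set H : ℝ → ℝ := fun x => f1 x - 2 * f1 (x - τ) + f1 (x - 2*τ) with hHdef
  have hHc : Continuous H := by
    apply Continuous.add
    apply Continuous.sub hc1
    exact (continuous_const.mul (hc1.comp (continuous_id.sub continuous_const)))
    exact hc1.comp (continuous_id.sub continuous_const)
  have hHb : ∀ x : ℝ, t - τ ≤ x → x ≤ t → (H x)^2 ≤ τ^3 * I := by
    intro x hx1 hx2
    have h1 : (H x)^2 ≤ τ * ∫ v in (0:ℝ)..τ, (G (x - v))^2 := by
      rw [show H x = ∫ v in (0:ℝ)..τ, G (x - v) from (hH x).symm]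
      exact cs_aux _ τ hτ (hGc.comp (continuous_const.sub continuous_id))
    have h2 : ∫ v in (0:ℝ)..τ, (G (x - v))^2 ≤ ∫ _v in (0:ℝ)..τ, τ * I := by
      apply intervalIntegral.integral_mono_on hτ.le
        (((hGc.comp (continuous_const.sub continuous_id)).pow 2).intervalIntegrable _ _)
        intervalIntegrable_const
      intro v hv
      exact hG (x - v) (by cases hv with | intro a b => linarith [a, b])
        (by cases hv with | intro a b => linarith [a, b])
    rw [intervalIntegral.integral_const, sub_zero, smul_eq_mul] at h2
    nlinarith
  -- outermost
  have hA : r t - 3 * r (t - τ) + 3 * r (t - 2*τ) - r (t - 3*τ) = ∫ u in (0:ℝ)..τ, H (t - u) := by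
    have hrw : ∀ u : ℝ, H (t - u) = (f1 (t - u) - 2 * f1 ((t - τ) - u)) + f1 ((t - 2*τ) - u) := by
      intro u; simp only [hHdef]; ring_nf
    simp_rw [hrw]
    have i1 : ∀ c : ℝ, IntervalIntegrable (fun u => f1 (c - u)) MeasureTheory.volume 0 τ :=
      fun c => (hc1.comp (continuous_const.sub continuous_id)).intervalIntegrable 0 τ
    rw [intervalIntegral.integral_add (((i1 t).sub ((i1 (t-τ)).const_mul 2))) (i1 (t - 2*τ)),
      intervalIntegral.integral_sub (i1 t) ((i1 (t-τ)).const_mul 2),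
      intervalIntegral.integral_const_mul, Ia t, Ia (t - τ), Ia (t - 2*τ)]
    ring_nf
  -- final assembly
  have hmain : (r t - 3 * r (t - τ) + 3 * r (t - 2*τ) - r (t - 3*τ))^2 ≤ τ^5 * I := by
    rw [hA]
    have h1 : (∫ u in (0:ℝ)..τ, H (t - u))^2 ≤ τ * ∫ u in (0:ℝ)..τ, (H (t - u))^2 :=
      cs_aux _ τ hτ (hHc.comp (continuous_const.sub continuous_id))
    have h2 : ∫ u in (0:ℝ)..τ, (H (t - u))^2 ≤ ∫ _u in (0:ℝ)..τ, τ^3 * I := by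
      apply intervalIntegral.integral_mono_on hτ.le
        (((hHc.comp (continuous_const.sub continuous_id)).pow 2).intervalIntegrable _ _)
        intervalIntegrable_const
      intro u hu
      exact hHb (t - u) (by linarith [hu.1, hu.2]) (by linarith [hu.1, hu.2])
    rw [intervalIntegral.integral_const, sub_zero, smul_eq_mul] at h2
    nlinarith
  have habs : ∀ x : ℝ, |x|^2 = x^2 := fun x => sq_abs x
  simp_rw [habs]
  have hIeq : (∫ s in (t - 3*τ)..t, |f3 s|^2) = I := by
    rw [hI]; congr 1; ext s; exact sq_abs _
  calc (r t - 3 * r (t - τ) + 3 * r (t - 2*τ) - r (t - 3*τ))^2 ≤ τ^5 * I := hmain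
    _ ≤ 9 * τ^5 / 8 * I := by nlinarith [pow_pos hτ 5]
    _ = 9 * τ^5 / 8 * ∫ s in (t - 3*τ)..t, f3 s ^ 2 := by rw [hI]
end

section
/- Let p : ℝ → ℝ be three times continuously differentiable and τ > 0. Then for every t, |p'(t) - (5p(t-τ) - 8p(t-2τ) + 3p(t-3τ))/(2τ)| ≤ C τ² max_{s ∈ [t-3τ, t]} |p'''(s)| for an absolute constant C (one may take C = 17/2). -/
open intervalIntegral MeasureTheory

lemma aux_int (c x C : ℝ) (n : ℕ) (hC : 0 ≤ C) (g : ℝ → ℝ) (hg : Continuous g)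
    (hb : ∀ u ∈ Set.uIcc c x, |g u| ≤ C * |x - u| ^ n) :
    |∫ u in c..x, g u| ≤ C * |x - c| ^ (n + 1) / (n + 1) := by
  have hbound : IntervalIntegrable (fun u => C * |x - u| ^ n) volume c x := by
    apply Continuous.intervalIntegrable
    continuity
  have h1 : |∫ u in c..x, g u| ≤ |∫ u in c..x, C * |x - u| ^ n| := by
    have := intervalIntegral.norm_integral_le_abs_of_norm_le (f := g) (μ := volume) (a := c) (b := x)
      ?_ hbound
    · simpa using this
    · filter_upwards [MeasureTheory.ae_restrict_mem measurableSet_uIoc] with u hu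
      simpa using hb u (Set.uIoc_subset_uIcc hu)
  refine h1.trans ?_
  have hne : ((n:ℝ)+1) ≠ 0 := by positivity
  have hee : 1 + n - 1 = n := by omega
  rcases le_total c x with h | h
  · have hxc : (0:ℝ) ≤ x - c := sub_nonneg.mpr h
    have hcong : ∫ u in c..x, C * |x - u| ^ n = ∫ u in c..x, C * (x - u) ^ n := by
      apply intervalIntegral.integral_congr
      intro u hu
      rw [Set.uIcc_of_le h] at hu
      simp only [abs_of_nonneg (show (0:ℝ) ≤ x - u by linarith [hu.2])]
    have hftc := intervalIntegral.integral_eq_sub_of_hasDerivAt (a := c) (b := x)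
      (f := fun u => -(C * (x - u) ^ (n+1) / ((n:ℝ)+1)))
      (f' := fun u => C * (x - u) ^ n)
      (fun u _ => by
        have h0 : HasDerivAt (fun u : ℝ => x - u) (-1) u := (hasDerivAt_id u).const_sub x
        have h1 := (((h0.pow (n+1)).div_const ((n : ℝ)+1)).const_mul C).neg
        convert h1 using 1 <;>
          first
            | (funext v; simp only [Pi.neg_apply, Pi.pow_apply]; ring)
            | (rw [Nat.add_sub_cancel]; push_cast; field_simp; try ring)
            | rfl)
      (by apply Continuous.intervalIntegrable; continuity)
    rw [hcong, hftc]
    have h2 : (fun u => -(C * (x - u) ^ (n+1) / ((n:ℝ)+1))) x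
        - (fun u => -(C * (x - u) ^ (n+1) / ((n:ℝ)+1))) c = C * (x - c) ^ (n+1) / ((n:ℝ)+1) := by
      simp
    rw [h2, abs_of_nonneg (div_nonneg (mul_nonneg hC (pow_nonneg hxc _)) (by positivity)),
      abs_of_nonneg hxc]
  · have hcx : (0:ℝ) ≤ c - x := sub_nonneg.mpr h
    have hcong : ∫ u in c..x, C * |x - u| ^ n = ∫ u in c..x, C * (u - x) ^ n := by
      apply intervalIntegral.integral_congr
      intro u hu
      rw [Set.uIcc_of_ge h] at hu
      simp only [abs_of_nonpos (show x - u ≤ 0 by linarith [hu.1]), neg_sub]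
    have hftc := intervalIntegral.integral_eq_sub_of_hasDerivAt (a := c) (b := x)
      (f := fun u => C * (u - x) ^ (n+1) / ((n:ℝ)+1))
      (f' := fun u => C * (u - x) ^ n)
      (fun u _ => by
        have h0 : HasDerivAt (fun u : ℝ => u - x) 1 u := (hasDerivAt_id u).sub_const x
        have h1 := ((h0.pow (n+1)).div_const ((n : ℝ)+1)).const_mul C
        convert h1 using 1 <;>
          first
            | (funext v; simp only [Pi.neg_apply, Pi.pow_apply]; ring)
            | (rw [Nat.add_sub_cancel]; push_cast; field_simp; try ring)
            | rfl)
      (by apply Continuous.intervalIntegrable; continuity)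
    rw [hcong, hftc]
    have h2 : (fun u => C * (u - x) ^ (n+1) / ((n:ℝ)+1)) x
        - (fun u => C * (u - x) ^ (n+1) / ((n:ℝ)+1)) c = -(C * (c - x) ^ (n+1) / ((n:ℝ)+1)) := by
      simp
    rw [h2, abs_neg, abs_of_nonneg (div_nonneg (mul_nonneg hC (pow_nonneg hcx _)) (by positivity)),
      abs_sub_comm, abs_of_nonneg hcx]

section taylor
variable (p : ℝ → ℝ) (hp : ContDiff ℝ 3 p)

lemma diff2 (hp : ContDiff ℝ 3 p) : Differentiable ℝ (iteratedDeriv 2 p) := by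
  rw [iteratedDeriv_eq_iterate]
  exact (hp.iterate_deriv' 1 2).differentiable (by simp)

lemma diff1 (hp : ContDiff ℝ 3 p) : Differentiable ℝ (deriv p) := by
  have h2 := hp.iterate_deriv' 2 1
  rw [Function.iterate_one] at h2
  exact h2.differentiable (by simp)

lemma hd1 (hp : ContDiff ℝ 3 p) (u : ℝ) : HasDerivAt p (deriv p u) u :=
  ((hp.differentiable (by norm_num)) u).hasDerivAt

lemma hd2 (hp : ContDiff ℝ 3 p) (u : ℝ) : HasDerivAt (deriv p) (iteratedDeriv 2 p u) u := by
  have := ((diff1 p hp) u).hasDerivAt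
  rwa [show deriv (deriv p) u = iteratedDeriv 2 p u by
    rw [show iteratedDeriv 2 p = deriv (iteratedDeriv 1 p) from iteratedDeriv_succ,
      iteratedDeriv_one]] at this

lemma hd3 (hp : ContDiff ℝ 3 p) (u : ℝ) : HasDerivAt (iteratedDeriv 2 p) (iteratedDeriv 3 p u) u := by
  have := ((diff2 p hp) u).hasDerivAt
  rwa [show deriv (iteratedDeriv 2 p) u = iteratedDeriv 3 p u by
    rw [show iteratedDeriv 3 p = deriv (iteratedDeriv 2 p) from iteratedDeriv_succ]] at this

lemma cont3 (hp : ContDiff ℝ 3 p) : Continuous (iteratedDeriv 3 p) :=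
  hp.continuous_iteratedDeriv 3 (by norm_num)

lemma taylor1 (hp : ContDiff ℝ 3 p) (M c x : ℝ)
    (hM : ∀ u ∈ Set.uIcc c x, |iteratedDeriv 3 p u| ≤ M) :
    |deriv p x - deriv p c - iteratedDeriv 2 p c * (x - c)| ≤ M * |x - c| ^ 2 / 2 := by
  have hM0 : 0 ≤ M := le_trans (abs_nonneg _) (hM c Set.left_mem_uIcc)
  set F : ℝ → ℝ := fun u => deriv p x - deriv p u - iteratedDeriv 2 p u * (x - u) with hF
  set φ : ℝ → ℝ := fun u => -(iteratedDeriv 3 p u * (x - u)) with hφ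
  have hcont : Continuous φ := by
    apply Continuous.neg
    exact (cont3 p hp).mul (by continuity)
  have hderiv : ∀ u ∈ Set.uIcc c x, HasDerivAt F (φ u) u := by
    intro u _
    have h1 := (hd2 p hp u).const_sub (deriv p x)
    have h2 := (hd3 p hp u).mul ((hasDerivAt_id u).const_sub x)
    have := h1.sub h2
    convert this using 1
    rfl
    rfl
    rfl
    simp only [hφ, id_eq]
    ring
  have hftc := intervalIntegral.integral_eq_sub_of_hasDerivAt hderiv
    (hcont.intervalIntegrable c x)
  have hFx : F x = 0 := by simp [hF]
  have hFc : |F c| = |∫ u in c..x, φ u| := by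
    rw [hftc, hFx, zero_sub, abs_neg]
  rw [hFc]
  have := aux_int c x M 1 hM0 φ hcont (fun u hu => by
    rw [hφ]
    simp only [abs_neg, abs_mul, pow_one]
    exact mul_le_mul_of_nonneg_right (hM u hu) (abs_nonneg _))
  calc |∫ u in c..x, φ u| ≤ M * |x - c| ^ (1+1) / (1+1) := by exact_mod_cast this
    _ = M * |x - c| ^ 2 / 2 := by norm_num

lemma taylor2 (hp : ContDiff ℝ 3 p) (M c x : ℝ)
    (hM : ∀ u ∈ Set.uIcc c x, |iteratedDeriv 3 p u| ≤ M) :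
    |p x - p c - deriv p c * (x - c) - iteratedDeriv 2 p c * (x - c) ^ 2 / 2|
      ≤ M * |x - c| ^ 3 / 6 := by
  have hM0 : 0 ≤ M := le_trans (abs_nonneg _) (hM c Set.left_mem_uIcc)
  set F : ℝ → ℝ := fun u =>
    p x - p u - deriv p u * (x - u) - iteratedDeriv 2 p u * (x - u) ^ 2 / 2 with hF
  set φ : ℝ → ℝ := fun u => -(iteratedDeriv 3 p u * (x - u) ^ 2 / 2) with hφ
  have hcont : Continuous φ := by
    apply Continuous.neg
    apply Continuous.div_const
    exact (cont3 p hp).mul (by continuity)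
  have hderiv : ∀ u ∈ Set.uIcc c x, HasDerivAt F (φ u) u := by
    intro u _
    have h1 := (hd1 p hp u).const_sub (p x)
    have h2 := (hd2 p hp u).mul ((hasDerivAt_id u).const_sub x)
    have h3 := ((hd3 p hp u).mul (((hasDerivAt_id u).const_sub x).pow 2)).div_const 2
    have := (h1.sub h2).sub h3
    convert this using 1
    rfl
    rfl
    rfl
    simp only [hφ, id_eq, Pi.pow_apply]
    ring
  have hftc := intervalIntegral.integral_eq_sub_of_hasDerivAt hderiv
    (hcont.intervalIntegrable c x)
  have hFx : F x = 0 := by simp [hF]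
  have hFc : |F c| = |∫ u in c..x, φ u| := by
    rw [hftc, hFx, zero_sub, abs_neg]
  rw [hFc]
  have := aux_int c x (M/2) 2 (by linarith) φ hcont (fun u hu => by
    rw [hφ]
    rw [abs_neg, abs_div, abs_mul, abs_pow, abs_two]
    rw [div_le_iff₀ (by norm_num : (0:ℝ) < 2)]
    calc |iteratedDeriv 3 p u| * |x - u| ^ 2 ≤ M * |x - u| ^ 2 :=
          mul_le_mul_of_nonneg_right (hM u hu) (by positivity)
      _ = M / 2 * |x - u| ^ 2 * 2 := by ring)
  calc |∫ u in c..x, φ u| ≤ M / 2 * |x - c| ^ (2+1) / (2+1) := by exact_mod_cast this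
    _ = M * |x - c| ^ 3 / 6 := by norm_num; ring

end taylor

set_option maxHeartbeats 1000000 in
theorem stmt_11 (p : ℝ → ℝ) (hp : ContDiff ℝ 3 p) (τ : ℝ) (hτ : 0 < τ) (t : ℝ) :
    |deriv p t - (5 * p (t - τ) - 8 * p (t - 2*τ) + 3 * p (t - 3*τ)) / (2*τ)|
      ≤ (17/2) * τ^2 * ⨆ s ∈ Set.Icc (t - 3*τ) t, |iteratedDeriv 3 p s| := by
  set M := ⨆ s ∈ Set.Icc (t - 3*τ) t, |iteratedDeriv 3 p s| with hMdef
  have hbdd : BddAbove ((fun s => |iteratedDeriv 3 p s|) '' Set.Icc (t - 3*τ) t) :=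
    (isCompact_Icc.image_of_continuousOn ((cont3 p hp).abs.continuousOn)).bddAbove
  have hne : (Set.Icc (t - 3*τ) t).Nonempty := ⟨t, by constructor <;> nlinarith⟩
  have hrange : BddAbove (Set.range fun i : Set.Icc (t - 3*τ) t =>
      |iteratedDeriv 3 p (i : ℝ)|) := by
    exact Set.image_eq_range (fun s => |iteratedDeriv 3 p s|) (Set.Icc (t - 3*τ) t) ▸ hbdd
  have hisup0 : sSup (∅ : Set ℝ) ≤ ⨆ i : Set.Icc (t - 3*τ) t, |iteratedDeriv 3 p (i : ℝ)| := by
    rw [Real.sSup_empty]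
    exact le_trans (abs_nonneg _) (le_ciSup_set hbdd hne.choose_spec)
  have hMb : ∀ s ∈ Set.Icc (t - 3*τ) t, |iteratedDeriv 3 p s| ≤ M := by
    intro s hs
    rw [hMdef]
    exact (le_ciSup_set hbdd hs).trans
      (le_of_eq (ciSup_subtype'' (f := fun s => |iteratedDeriv 3 p s|) hrange hisup0))
  have hmem : ∀ k : ℝ, 0 ≤ k → k ≤ 3 → t - k*τ ∈ Set.Icc (t - 3*τ) t := by
    intro k hk0 hk3
    constructor <;> nlinarith
  have hm0 : t ∈ Set.Icc (t - 3*τ) t := by constructor <;> nlinarith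
  have hm1 : t - τ ∈ Set.Icc (t - 3*τ) t := by
    have := hmem 1 (by norm_num) (by norm_num); simpa using this
  have hm2 : t - 2*τ ∈ Set.Icc (t - 3*τ) t := hmem 2 (by norm_num) (by norm_num)
  have hm3 : t - 3*τ ∈ Set.Icc (t - 3*τ) t := hmem 3 (by norm_num) (by norm_num)
  have h0M : 0 ≤ M := le_trans (abs_nonneg _) (hMb t hm0)
  have hsub : ∀ c x : ℝ, c ∈ Set.Icc (t - 3*τ) t → x ∈ Set.Icc (t - 3*τ) t →
      ∀ u ∈ Set.uIcc c x, |iteratedDeriv 3 p u| ≤ M := by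
    intro c x hc hx u hu
    exact hMb u (Set.uIcc_subset_Icc hc hx hu)
  -- the six defects
  have hb1 := taylor1 p hp M t (t - τ) (hsub t (t - τ) hm0 hm1)
  have hb2 := taylor1 p hp M t (t - 2*τ) (hsub t (t - 2*τ) hm0 hm2)
  have hb3 := taylor2 p hp M (t - τ) (t - 2*τ) (hsub (t - τ) (t - 2*τ) hm1 hm2)
  have hb4 := taylor2 p hp M (t - τ) (t - 3*τ) (hsub (t - τ) (t - 3*τ) hm1 hm3)
  have hb5 := taylor2 p hp M (t - 2*τ) (t - τ) (hsub (t - 2*τ) (t - τ) hm2 hm1)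
  have hb6 := taylor2 p hp M (t - 2*τ) (t - 3*τ) (hsub (t - 2*τ) (t - 3*τ) hm2 hm3)
  have e1 : |t - τ - t| = τ := by
    rw [show t - τ - t = -τ by ring, abs_neg, abs_of_pos hτ]
  have e2 : |t - 2*τ - t| = 2*τ := by
    rw [show t - 2*τ - t = -(2*τ) by ring, abs_neg, abs_of_pos (by linarith)]
  have e3 : |t - 2*τ - (t - τ)| = τ := by
    rw [show t - 2*τ - (t - τ) = -τ by ring, abs_neg, abs_of_pos hτ]
  have e4 : |t - 3*τ - (t - τ)| = 2*τ := by
    rw [show t - 3*τ - (t - τ) = -(2*τ) by ring, abs_neg, abs_of_pos (by linarith)]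
  have e5 : |t - τ - (t - 2*τ)| = τ := by
    rw [show t - τ - (t - 2*τ) = τ by ring, abs_of_pos hτ]
  have e6 : |t - 3*τ - (t - 2*τ)| = τ := by
    rw [show t - 3*τ - (t - 2*τ) = -τ by ring, abs_neg, abs_of_pos hτ]
  rw [e1] at hb1; rw [e2] at hb2; rw [e3] at hb3; rw [e4] at hb4
  rw [e5] at hb5; rw [e6] at hb6
  set d1 := deriv p (t - τ) - deriv p t - iteratedDeriv 2 p t * (t - τ - t) with hd1'
  set d2 := deriv p (t - 2*τ) - deriv p t - iteratedDeriv 2 p t * (t - 2*τ - t) with hd2'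
  set d3 := p (t - 2*τ) - p (t - τ) - deriv p (t - τ) * (t - 2*τ - (t - τ))
      - iteratedDeriv 2 p (t - τ) * (t - 2*τ - (t - τ)) ^ 2 / 2 with hd3'
  set d4 := p (t - 3*τ) - p (t - τ) - deriv p (t - τ) * (t - 3*τ - (t - τ))
      - iteratedDeriv 2 p (t - τ) * (t - 3*τ - (t - τ)) ^ 2 / 2 with hd4'
  set d5 := p (t - τ) - p (t - 2*τ) - deriv p (t - 2*τ) * (t - τ - (t - 2*τ))
      - iteratedDeriv 2 p (t - 2*τ) * (t - τ - (t - 2*τ)) ^ 2 / 2 with hd5'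
  set d6 := p (t - 3*τ) - p (t - 2*τ) - deriv p (t - 2*τ) * (t - 3*τ - (t - 2*τ))
      - iteratedDeriv 2 p (t - 2*τ) * (t - 3*τ - (t - 2*τ)) ^ 2 / 2 with hd6'
  have hτ' : (2*τ) ≠ 0 := by positivity
  have key : deriv p t - (5 * p (t - τ) - 8 * p (t - 2*τ) + 3 * p (t - 3*τ)) / (2*τ)
      = (-2*d1 + d2) + (8*d3 - 2*d4 + d5 - d6) / (2*τ) := by
    rw [hd1', hd2', hd3', hd4', hd5', hd6']
    field_simp
    ring
  rw [key]
  have step1 : |(-2*d1 + d2) + (8*d3 - 2*d4 + d5 - d6) / (2*τ)|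
      ≤ (2*|d1| + |d2|) + (8*|d3| + 2*|d4| + |d5| + |d6|) / (2*τ) := by
    refine (abs_add_le _ _).trans ?_
    gcongr
    · calc |(-2*d1 + d2)| ≤ |(-2*d1)| + |d2| := abs_add_le _ _
        _ = 2*|d1| + |d2| := by rw [abs_mul]; norm_num
    · rw [abs_div, abs_of_pos (by linarith : (0:ℝ) < 2*τ)]
      gcongr
      calc |8*d3 - 2*d4 + d5 - d6| ≤ |8*d3 - 2*d4 + d5| + |d6| := abs_sub _ _
        _ ≤ |8*d3 - 2*d4| + |d5| + |d6| := by gcongr; exact abs_add_le _ _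
        _ ≤ |8*d3| + |2*d4| + |d5| + |d6| := by gcongr; exact abs_sub _ _
        _ = 8*|d3| + 2*|d4| + |d5| + |d6| := by
            rw [abs_mul, abs_mul]; norm_num
  refine step1.trans ?_
  have habs3 : 0 ≤ |d3| := abs_nonneg _
  have step2 : (8*|d3| + 2*|d4| + |d5| + |d6|) / (2*τ)
      ≤ (8*(M*τ^3/6) + 2*(M*(2*τ)^3/6) + M*τ^3/6 + M*τ^3/6) / (2*τ) := by
    gcongr
  refine (by linarith [step2] :
      (2*|d1| + |d2|) + (8*|d3| + 2*|d4| + |d5| + |d6|) / (2*τ)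
        ≤ (2*(M*τ^2/2) + M*(2*τ)^2/2) + (8*(M*τ^3/6) + 2*(M*(2*τ)^3/6) + M*τ^3/6 + M*τ^3/6) / (2*τ)).trans ?_
  have : (2*(M*τ^2/2) + M*(2*τ)^2/2) + (8*(M*τ^3/6) + 2*(M*(2*τ)^3/6) + M*τ^3/6 + M*τ^3/6) / (2*τ)
      = (31/6) * τ^2 * M := by
    field_simp
    ring
  rw [this]
  nlinarith [mul_nonneg h0M (sq_nonneg τ)]
end
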